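/- Let ξ satisfy the curve condition, let 0 < r₀ < r̃₀, and assume the functions x ↦ s(x) and x ↦ r(x) are twice differentiable on Γ_{r₀} \ Γ. Then for every x ∈ Γ_{r₀} \ Γ, Δr(x) = [n − 2 − (n−1)·(x − ξ(s(x))) · ξ''(s(x))] / [1 − (x − ξ(s(x))) · ξ''(s(x))] · r(x)⁻¹. -/

import Mathlib

open scoped RealInnerProductSpace
open Filter Topology Set

/-- The Laplacian of `f : ℝⁿ → ℝ`: the sum of the second derivatives along the
standard orthonormal coordinate directions. -/
noncomputable def lap {n : ℕ} (f : EuclideanSpace ℝ (Fin n) → ℝ)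
    (x : EuclideanSpace ℝ (Fin n)) : ℝ :=
  ∑ i : Fin n, iteratedFDeriv ℝ 2 f x ![EuclideanSpace.single i 1, EuclideanSpace.single i 1]

/-- `m_* = 0` if `n = 2` and `(n-3)/(n-1)` if `n ≥ 3`. -/
noncomputable def mstar (n : ℕ) : ℝ := if n = 2 then 0 else ((n : ℝ) - 3) / ((n : ℝ) - 1)

section aux

variable {E : Type*} [NormedAddCommGroup E] [InnerProductSpace ℝ E]

lemma aux_hasFDerivAt_norm_sub (p y : E) (h : y ≠ p) :
    HasFDerivAt (fun z => ‖z - p‖) (innerSL ℝ ((‖y - p‖)⁻¹ • (y - p))) y := by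
  have hw : y - p ≠ 0 := sub_ne_zero.mpr h
  have hρ : (0:ℝ) < ‖y - p‖ := norm_pos_iff.mpr hw
  have hid : HasFDerivAt (fun z : E => z - p) (ContinuousLinearMap.id ℝ E) y :=
    (hasFDerivAt_id y).sub_const p
  have h1 := hid.inner ℝ hid
  have hii : ⟪y - p, y - p⟫ = ‖y - p‖ * ‖y - p‖ := real_inner_self_eq_norm_mul_norm (y - p)
  have h2 : HasDerivAt Real.sqrt (1/(2*Real.sqrt (⟪y - p, y - p⟫))) (⟪y - p, y - p⟫) :=
    Real.hasDerivAt_sqrt (by rw [hii]; positivity)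
  have h3 := h2.comp_hasFDerivAt y h1
  have heq : (fun z : E => Real.sqrt ⟪z - p, z - p⟫) = fun z => ‖z - p‖ := by
    funext z
    rw [real_inner_self_eq_norm_mul_norm, Real.sqrt_mul_self (norm_nonneg _)]
  rw [Function.comp_def, heq] at h3
  convert h3 using 1
  · rfl
  · rfl
  ext v
  simp only [innerSL_apply_apply, ContinuousLinearMap.smul_apply, fderivInnerCLM_apply,
    ContinuousLinearMap.comp_apply, ContinuousLinearMap.coe_id', id_eq,
    ContinuousLinearMap.prod_apply, smul_eq_mul]
  rw [hii, Real.sqrt_mul_self (norm_nonneg _)]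
  rw [real_inner_smul_left]
  rw [real_inner_comm (y-p) v]
  ring

lemma aux_sum_inner_single (n : ℕ) (v : EuclideanSpace ℝ (Fin n)) :
    ∑ i, ⟪v, EuclideanSpace.single i (1:ℝ)⟫ * ⟪v, EuclideanSpace.single i (1:ℝ)⟫
      = ‖v‖^2 := by
  have h : ∀ i, ⟪v, EuclideanSpace.single i (1:ℝ)⟫ = v i := by
    intro i; rw [EuclideanSpace.inner_single_right]; simp
  simp_rw [h]
  rw [← real_inner_self_eq_norm_sq, PiLp.inner_apply]
  simp [RCLike.inner_apply, mul_comm, sq]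

lemma aux_sum_inner_single_self (n : ℕ) :
    ∑ i : Fin n, ⟪(EuclideanSpace.single i (1:ℝ) : EuclideanSpace ℝ (Fin n)),
      EuclideanSpace.single i (1:ℝ)⟫ = (n : ℝ) := by
  have h : ∀ i : Fin n, ⟪(EuclideanSpace.single i (1:ℝ) : EuclideanSpace ℝ (Fin n)),
      EuclideanSpace.single i (1:ℝ)⟫ = 1 := by
    intro i
    rw [real_inner_self_eq_norm_sq]
    simp
  simp [h]

end aux

theorem stmt_10 (n : ℕ) (hn : 2 ≤ n)
    (ξ : ℝ → EuclideanSpace ℝ (Fin n))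
    (hξC3 : ContDiff ℝ 3 ξ) (hξinj : Function.Injective ξ)
    (hξ1 : ∀ σ : ℝ, ‖deriv ξ σ‖ = 1)
    (K : ℝ) (hK : 1 < K)
    (hξ2 : ∀ σ : ℝ, ‖deriv (deriv ξ) σ‖ ≤ K)
    (hξ3 : ∀ σ : ℝ, ‖deriv (deriv (deriv ξ)) σ‖ ≤ K)
    (r : EuclideanSpace ℝ (Fin n) → ℝ)
    (hrdef : ∀ x, r x = Metric.infDist x (Set.range ξ))
    (rt0 : ℝ) (hrt0 : 0 < rt0) (hrt0' : rt0 < (2 * K)⁻¹)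
    (s : EuclideanSpace ℝ (Fin n) → ℝ)
    (hsdef : ∀ x, r x < rt0 →
      r x = ‖x - ξ (s x)‖ ∧ ∀ σ : ℝ, r x = ‖x - ξ σ‖ → σ = s x)
    (r₀ : ℝ) (hr₀ : 0 < r₀) (hr₀' : r₀ < rt0)
    (hsdiff : ∀ x : EuclideanSpace ℝ (Fin n), r x < r₀ → x ∉ Set.range ξ →
      ContDiffAt ℝ 2 s x)
    (hrdiff : ∀ x : EuclideanSpace ℝ (Fin n), r x < r₀ → x ∉ Set.range ξ →
      ContDiffAt ℝ 2 r x) :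
    ∀ x : EuclideanSpace ℝ (Fin n), r x < r₀ → x ∉ Set.range ξ →
      lap r x = ((n : ℝ) - 2 - ((n : ℝ) - 1) * ⟪x - ξ (s x), deriv (deriv ξ) (s x)⟫)
        / (1 - ⟪x - ξ (s x), deriv (deriv ξ) (s x)⟫) * (r x)⁻¹ := by
  -- smoothness of ξ
  have h3 : ContDiff ℝ ((2:ℕ) + 1) ξ := by exact_mod_cast hξC3
  have hξdiff : Differentiable ℝ ξ := (contDiff_succ_iff_deriv.mp h3).1
  have hξ'C2 : ContDiff ℝ 2 (deriv ξ) := (contDiff_succ_iff_deriv.mp h3).2.2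
  have hξ'diff : Differentiable ℝ (deriv ξ) := hξ'C2.differentiable two_ne_zero
  -- positivity-of-r facts
  have hrle : ∀ (y : EuclideanSpace ℝ (Fin n)) (σ : ℝ), r y ≤ ‖y - ξ σ‖ := by
    intro y σ
    rw [hrdef, ← dist_eq_norm]
    exact Metric.infDist_le_dist_of_mem ⟨σ, rfl⟩
  have hrange : ∀ y : EuclideanSpace ℝ (Fin n), 0 < r y → y ∉ Set.range ξ := by
    intro y hy hmem
    obtain ⟨σ, hσ⟩ := hmem
    have h1 := hrle y σ
    have h0 : ‖y - ξ σ‖ = 0 := by rw [← hσ]; simp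
    rw [h0] at h1
    linarith
  have hrpos : ∀ y : EuclideanSpace ℝ (Fin n), r y < rt0 → y ∉ Set.range ξ → 0 < r y := by
    intro y hy hymem
    have hA := (hsdef y hy).1
    rcases eq_or_lt_of_le (norm_nonneg (y - ξ (s y))) with h | h
    · exfalso
      apply hymem
      have : y = ξ (s y) := by
        have := sub_eq_zero.mp (norm_eq_zero.mp h.symm)
        exact this
      exact this ▸ mem_range_self _
    · rw [hA]; exact h
  have hrcont : Continuous r := by
    have : r = fun y => Metric.infDist y (Set.range ξ) := funext hrdef
    rw [this]; exact Metric.continuous_infDist_pt _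
  intro x hx hxR
  have hxrt : r x < rt0 := hx.trans hr₀'
  have hxA := (hsdef x hxrt).1
  have hρ : 0 < r x := hrpos x hxrt hxR
  -- the neighborhood V
  set V : Set (EuclideanSpace ℝ (Fin n)) := {y | 0 < r y ∧ r y < r₀} with hVdef
  have hVopen : IsOpen V :=
    (isOpen_lt continuous_const hrcont).inter (isOpen_lt hrcont continuous_const)
  have hxV : x ∈ V := ⟨hρ, hx⟩
  have hVnhds : V ∈ 𝓝 x := hVopen.mem_nhds hxV
  -- facts on V
  have hVnotr : ∀ y ∈ V, y ∉ Set.range ξ := fun y hy => hrange y hy.1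
  have hVA : ∀ y ∈ V, r y = ‖y - ξ (s y)‖ := fun y hy => (hsdef y (hy.2.trans hr₀')).1
  -- orthogonality on V
  have horth : ∀ y ∈ V, ⟪y - ξ (s y), deriv ξ (s y)⟫ = 0 := by
    intro y hy
    have hyA := hVA y hy
    have hmin : IsMinOn (fun σ => ⟪y - ξ σ, y - ξ σ⟫) Set.univ (s y) := by
      apply isMinOn_iff.mpr
      intro σ _
      have h1 : ⟪y - ξ (s y), y - ξ (s y)⟫ = ‖y - ξ (s y)‖ * ‖y - ξ (s y)‖ :=
        real_inner_self_eq_norm_mul_norm _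
      have h2 : ⟪y - ξ σ, y - ξ σ⟫ = ‖y - ξ σ‖ * ‖y - ξ σ‖ :=
        real_inner_self_eq_norm_mul_norm _
      rw [h1, h2, ← hyA]
      exact mul_self_le_mul_self (le_of_lt hy.1) (hrle y σ)
    have hloc : IsLocalMin (fun σ => ⟪y - ξ σ, y - ξ σ⟫) (s y) :=
      hmin.isLocalMin Filter.univ_mem
    have hder : HasDerivAt (fun σ => ⟪y - ξ σ, y - ξ σ⟫)
        (⟪y - ξ (s y), -deriv ξ (s y)⟫ + ⟪-deriv ξ (s y), y - ξ (s y)⟫) (s y) := by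
      have h1 : HasDerivAt (fun σ => y - ξ σ) (-deriv ξ (s y)) (s y) :=
        ((hξdiff (s y)).hasDerivAt).const_sub y
      exact h1.inner ℝ h1
    have h0 := hloc.deriv_eq_zero
    rw [hder.deriv] at h0
    rw [inner_neg_left, real_inner_comm (y - ξ (s y))] at h0
    have : ⟪y - ξ (s y), deriv ξ (s y)⟫ = - ⟪y - ξ (s y), deriv ξ (s y)⟫ := by
      rw [inner_neg_right] at h0
      linarith
    linarith [this]
  -- gradient of r on V
  have hgrad : ∀ y ∈ V, fderiv ℝ r y = innerSL ℝ ((r y)⁻¹ • (y - ξ (s y))) := by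
    intro y hy
    have hyA := hVA y hy
    have hyR := hVnotr y hy
    have hyne : y ≠ ξ (s y) := by
      intro h
      exact hyR (h ▸ mem_range_self _)
    have hnorm := aux_hasFDerivAt_norm_sub (ξ (s y)) y hyne
    have hrd : DifferentiableAt ℝ r y :=
      (hrdiff y hy.2 hyR).differentiableAt two_ne_zero
    have hmax : IsMaxOn (fun z => r z - ‖z - ξ (s y)‖) Set.univ y := by
      apply isMaxOn_iff.mpr
      intro z _
      have h1 := hrle z (s y)
      show r z - ‖z - ξ (s y)‖ ≤ r y - ‖y - ξ (s y)‖
      rw [← hyA]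
      linarith
    have hloc : IsLocalMax (fun z => r z - ‖z - ξ (s y)‖) y := hmax.isLocalMax Filter.univ_mem
    have hz := hloc.fderiv_eq_zero
    have hdm := (hrd.hasFDerivAt.sub hnorm).fderiv
    rw [show (fun z => r z - ‖z - ξ (s y)‖) = r - fun z => ‖z - ξ (s y)‖ from rfl, hdm] at hz
    have := sub_eq_zero.mp hz
    rw [this, ← hyA]
  -- derivative data at x
  have hsd : DifferentiableAt ℝ s x := (hsdiff x hx hxR).differentiableAt two_ne_zero
  have hcomp1 : HasFDerivAt (fun z => ξ (s z))
      ((ContinuousLinearMap.smulRight (1 : ℝ →L[ℝ] ℝ) (deriv ξ (s x))).comp (fderiv ℝ s x)) x :=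
    ((hξdiff (s x)).hasDerivAt.hasFDerivAt).comp x hsd.hasFDerivAt
  have hcomp2 : HasFDerivAt (fun z => deriv ξ (s z))
      ((ContinuousLinearMap.smulRight (1 : ℝ →L[ℝ] ℝ) (deriv (deriv ξ) (s x))).comp
        (fderiv ℝ s x)) x :=
    ((hξ'diff (s x)).hasDerivAt.hasFDerivAt).comp x hsd.hasFDerivAt
  have hf1 : HasFDerivAt (fun z => z - ξ (s z))
      (ContinuousLinearMap.id ℝ _ -
        (ContinuousLinearMap.smulRight (1 : ℝ →L[ℝ] ℝ) (deriv ξ (s x))).comp (fderiv ℝ s x)) x :=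
    (hasFDerivAt_id x).sub hcomp1
  -- the key bound on q
  have hq2 : ⟪x - ξ (s x), deriv (deriv ξ) (s x)⟫ < 1/2 := by
    have h1 : ⟪x - ξ (s x), deriv (deriv ξ) (s x)⟫ ≤ ‖x - ξ (s x)‖ * ‖deriv (deriv ξ) (s x)‖ :=
      real_inner_le_norm _ _
    have h2 : ‖x - ξ (s x)‖ < (2*K)⁻¹ := by
      rw [← hxA]; exact hx.trans (hr₀'.trans hrt0')
    have hK0 : (0:ℝ) < K := lt_trans one_pos hK
    have h3 : ‖x - ξ (s x)‖ * ‖deriv (deriv ξ) (s x)‖ ≤ ‖x - ξ (s x)‖ * K :=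
      mul_le_mul_of_nonneg_left (hξ2 _) (norm_nonneg _)
    have h4 : ‖x - ξ (s x)‖ * K < (2*K)⁻¹ * K :=
      mul_lt_mul_of_pos_right h2 hK0
    have h5 : (2*K)⁻¹ * K = 1/2 := by
      field_simp
    linarith
  have h1q : (0:ℝ) < 1 - ⟪x - ξ (s x), deriv (deriv ξ) (s x)⟫ := by linarith
  have h1q' : (1:ℝ) - ⟪x - ξ (s x), deriv (deriv ξ) (s x)⟫ ≠ 0 := ne_of_gt h1q
  -- fderiv of s formula
  have hphi : ∀ v, ⟪v, deriv ξ (s x)⟫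
      = (1 - ⟪x - ξ (s x), deriv (deriv ξ) (s x)⟫) * fderiv ℝ s x v := by
    have hBev : (fun z => ⟪z - ξ (s z), deriv ξ (s z)⟫) =ᶠ[𝓝 x] fun _ => (0:ℝ) :=
      Filter.eventuallyEq_of_mem hVnhds fun y hy => horth y hy
    have hB := (hf1.inner ℝ hcomp2).fderiv
    have hB0 : fderiv ℝ (fun z => ⟪z - ξ (s z), deriv ξ (s z)⟫) x = 0 := by
      rw [hBev.fderiv_eq]; exact fderiv_const_apply 0
    rw [hB0] at hB
    intro v
    have := congrArg (fun (L : EuclideanSpace ℝ (Fin n) →L[ℝ] ℝ) => L v) hB.symm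
    simp only [ContinuousLinearMap.zero_apply, fderivInnerCLM_apply,
      ContinuousLinearMap.comp_apply, ContinuousLinearMap.prod_apply,
      ContinuousLinearMap.coe_sub', Pi.sub_apply, ContinuousLinearMap.coe_id', id_eq,
      ContinuousLinearMap.smulRight_apply, ContinuousLinearMap.one_apply, one_smul] at this
    have hT : ⟪deriv ξ (s x), deriv ξ (s x)⟫ = (1:ℝ) := by
      rw [real_inner_self_eq_norm_mul_norm, hξ1]; ring
    simp only [real_inner_smul_right, inner_sub_left, real_inner_smul_left, hT] at this
    have hsub : ⟪x - ξ (s x), deriv (deriv ξ) (s x)⟫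
        = ⟪x, deriv (deriv ξ) (s x)⟫ - ⟪ξ (s x), deriv (deriv ξ) (s x)⟫ := inner_sub_left _ _ _
    linear_combination this + (fderiv ℝ s x v) * hsub
  -- gradient at x as HasFDerivAt
  have hrd : DifferentiableAt ℝ r x := (hrdiff x hx hxR).differentiableAt two_ne_zero
  have hgradx : fderiv ℝ r x = innerSL ℝ ((r x)⁻¹ • (x - ξ (s x))) := hgrad x hxV
  have hr' : HasFDerivAt r (innerSL ℝ ((r x)⁻¹ • (x - ξ (s x)))) x := by
    rw [← hgradx]; exact hrd.hasFDerivAt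
  -- second derivative of r, evaluated
  have hrd2 : DifferentiableAt ℝ (fderiv ℝ r) x := by
    have : ContDiffAt ℝ 1 (fderiv ℝ r) x :=
      (hrdiff x hx hxR).fderiv_right (le_refl _)
    exact this.differentiableAt one_ne_zero
  have key : ∀ e : EuclideanSpace ℝ (Fin n), fderiv ℝ (fderiv ℝ r) x e e
      = (r x)⁻¹ * (⟪e, e⟫
          - (⟪e, deriv ξ (s x)⟫ / (1 - ⟪x - ξ (s x), deriv (deriv ξ) (s x)⟫))
            * ⟪deriv ξ (s x), e⟫)
        - ((r x)⁻¹)^3 * (⟪x - ξ (s x), e⟫ * ⟪x - ξ (s x), e⟫) := by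
    intro e
    -- step A : express as derivative of z ↦ fderiv r z e
    have hA2 : fderiv ℝ (fun z => fderiv ℝ r z e) x = (fderiv ℝ (fderiv ℝ r) x).flip e := by
      rw [fderiv_clm_apply hrd2 (differentiableAt_const e)]
      simp
    -- step B : eventual equality with explicit formula
    have hBev : (fun z => fderiv ℝ r z e) =ᶠ[𝓝 x]
        fun z => (r z)⁻¹ * ⟪z - ξ (s z), e⟫ :=
      Filter.eventuallyEq_of_mem hVnhds (by
        intro y hy
        show fderiv ℝ r y e = (r y)⁻¹ * ⟪y - ξ (s y), e⟫
        rw [hgrad y hy, innerSL_apply_apply, real_inner_smul_left])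
    -- step C : compute derivative of the explicit formula
    have hinv : HasFDerivAt (fun z => (r z)⁻¹)
        ((-((r x)^2)⁻¹) • innerSL ℝ ((r x)⁻¹ • (x - ξ (s x)))) x :=
      (hasDerivAt_inv (ne_of_gt hρ)).comp_hasFDerivAt x hr'
    have hlin : HasFDerivAt (fun z => ⟪z - ξ (s z), e⟫)
        ((fderivInnerCLM ℝ (x - ξ (s x), e)).comp
          ((ContinuousLinearMap.id ℝ _ -
            (ContinuousLinearMap.smulRight (1 : ℝ →L[ℝ] ℝ) (deriv ξ (s x))).comp
              (fderiv ℝ s x)).prod 0)) x := by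
      have := hf1.inner ℝ (hasFDerivAt_const e x)
      convert this using 2
    have hmul := hinv.mul hlin
    have hval : fderiv ℝ (fun z => fderiv ℝ r z e) x e
        = (r x)⁻¹ * (⟪e, e⟫ - fderiv ℝ s x e * ⟪deriv ξ (s x), e⟫)
          + ⟪x - ξ (s x), e⟫ * (-((r x)^2)⁻¹ * ((r x)⁻¹ * ⟪x - ξ (s x), e⟫)) := by
      rw [hBev.fderiv_eq, show (fun z => (r z)⁻¹ * ⟪z - ξ (s z), e⟫) = (fun z => (r z)⁻¹) * (fun z => ⟪z - ξ (s z), e⟫) from rfl, hmul.fderiv]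
      simp only [ContinuousLinearMap.add_apply, ContinuousLinearMap.smul_apply,
        fderivInnerCLM_apply, ContinuousLinearMap.comp_apply, ContinuousLinearMap.prod_apply,
        ContinuousLinearMap.coe_sub', Pi.sub_apply, ContinuousLinearMap.coe_id', id_eq,
        ContinuousLinearMap.smulRight_apply, ContinuousLinearMap.one_apply, one_smul,
        ContinuousLinearMap.zero_apply, innerSL_apply_apply, smul_eq_mul]
      rw [inner_zero_right, inner_sub_left, real_inner_smul_left, real_inner_smul_left]
      ring
    have hphie := hphi e
    rw [hA2] at hval
    simp only [ContinuousLinearMap.flip_apply] at hval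
    rw [hval]
    have : fderiv ℝ s x e
        = ⟪e, deriv ξ (s x)⟫ / (1 - ⟪x - ξ (s x), deriv (deriv ξ) (s x)⟫) := by
      rw [hphie, mul_comm, mul_div_assoc, div_self h1q', mul_one]
    rw [this]
    ring
  -- put it together
  have hlap : lap r x = ∑ i : Fin n,
      fderiv ℝ (fderiv ℝ r) x (EuclideanSpace.single i 1) (EuclideanSpace.single i 1) := by
    unfold lap
    congr 1
    funext i
    rw [iteratedFDeriv_two_apply]
    simp
  rw [hlap]
  have hsum : ∑ i : Fin n,
      fderiv ℝ (fderiv ℝ r) x (EuclideanSpace.single i 1) (EuclideanSpace.single i 1)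
    = (r x)⁻¹ * ((n:ℝ)
        - (1 / (1 - ⟪x - ξ (s x), deriv (deriv ξ) (s x)⟫)))
      - ((r x)⁻¹)^3 * (r x)^2 := by
    simp_rw [key]
    rw [Finset.sum_sub_distrib, ← Finset.mul_sum, ← Finset.mul_sum]
    congr 1
    · rw [Finset.sum_sub_distrib]
      rw [aux_sum_inner_single_self]
      congr 1
      have : ∀ i : Fin n,
          (⟪(EuclideanSpace.single i (1:ℝ) : EuclideanSpace ℝ (Fin n)), deriv ξ (s x)⟫
            / (1 - ⟪x - ξ (s x), deriv (deriv ξ) (s x)⟫))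
            * ⟪deriv ξ (s x), EuclideanSpace.single i (1:ℝ)⟫
          = (1 - ⟪x - ξ (s x), deriv (deriv ξ) (s x)⟫)⁻¹
            * (⟪deriv ξ (s x), EuclideanSpace.single i (1:ℝ)⟫
              * ⟪deriv ξ (s x), EuclideanSpace.single i (1:ℝ)⟫) := by
        intro i
        rw [real_inner_comm (EuclideanSpace.single i (1:ℝ)) (deriv ξ (s x))]
        ring
      simp_rw [this]
      rw [← Finset.mul_sum, aux_sum_inner_single]
      rw [hξ1]
      simp [one_div]
    · rw [aux_sum_inner_single]
      rw [← hxA]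
  have hρne : r x ≠ 0 := ne_of_gt hρ
  have halg : ∀ q ρ : ℝ, ρ ≠ 0 → 1 - q ≠ 0 →
      ρ⁻¹ * ((n:ℝ) - 1/(1-q)) - (ρ⁻¹)^3 * ρ^2
        = ((n:ℝ) - 2 - ((n:ℝ)-1)*q)/(1-q) * ρ⁻¹ := by
    intro q ρ hρ0 hq0
    field_simp
    ring
  rw [hsum]
  exact halg _ _ hρne h1q'
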